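/- In the setting of Lemma 2 with δₙ ≤ c*·h and h < 1/2, for j = 0,1,2 and all t₁, t₂ ∈ [0,1]: |w_{nj}(t₂) − w_{nj}(t₁)| ≤ 18 L h^{j−1} |t₂ − t₁|. -/

import Mathlib

open MeasureTheory

/-- In the setting of Lemma 2 with mesh `δₙ ≤ c*·h` and `h < 1/2`, for `j = 0,1,2` and
all `t₁, t₂ ∈ [0,1]`: `|w_{nj}(t₂) − w_{nj}(t₁)| ≤ 18 L h^{j−1} |t₂ − t₁|`. -/
theorem stmt_10 (K : ℝ → ℝ) (L : ℝ) (hL : 1 ≤ L)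
    (hKlip : ∀ x y, |K x - K y| ≤ L * |x - y|)
    (hKnonneg : ∀ t, 0 ≤ K t)
    (hKsym : ∀ t, K t = K (-t))
    (hKsupp : ∀ t, t ∉ Set.Icc (-1 : ℝ) 1 → K t = 0)
    (hKint : ∫ t in Set.Icc (-1 : ℝ) 1, K t = 1)
    (hK1 : K 1 = 0) (hKm1 : K (-1) = 0)
    (h : ℝ) (hh : h ∈ Set.Ioo (0 : ℝ) (1 / 2))
    (κ1 κ2 : ℝ)
    (hκ1 : κ1 = ∫ u in Set.Icc (-1 : ℝ) 1, |u| * K u)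
    (hκ2 : κ2 = ∫ u in Set.Icc (-1 : ℝ) 1, u ^ 2 * K u)
    (n : ℕ) (z : ℕ → ℝ)
    (hz0 : z 0 = 0) (hzl : z (n + 1) = 1)
    (hzmono : ∀ i ≤ n, z i ≤ z (i + 1))
    (hmesh : ∀ i, 1 ≤ i → i ≤ n + 1 →
      z i - z (i - 1) ≤ (κ2 - κ1 ^ 2) / (96 * L * (6 * L + κ2 + κ1 / 2)) * h) :
    let w : ℕ → ℝ → ℝ := fun j t =>
      ∑ i ∈ Finset.Icc 1 n, (t - z i) ^ j * (K ((t - z i) / h) / h) * (z i - z (i - 1))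
    ∀ j ≤ 2, ∀ t₁ ∈ Set.Icc (0 : ℝ) 1, ∀ t₂ ∈ Set.Icc (0 : ℝ) 1,
      |w j t₂ - w j t₁| ≤ 18 * L * h ^ ((j : ℤ) - 1) * |t₂ - t₁| := by
  classical
  obtain ⟨hh0, hh2⟩ := hh
  have hL0 : (0:ℝ) < L := by linarith
  have hκ1nn : 0 ≤ κ1 := by
    rw [hκ1]
    apply setIntegral_nonneg measurableSet_Icc
    intro u _
    exact mul_nonneg (abs_nonneg u) (hKnonneg u)
  have hκ2nn : 0 ≤ κ2 := by
    rw [hκ2]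
    apply setIntegral_nonneg measurableSet_Icc
    intro u _
    exact mul_nonneg (sq_nonneg u) (hKnonneg u)
  set c : ℝ := (κ2 - κ1 ^ 2) / (96 * L * (6 * L + κ2 + κ1 / 2)) with hc
  have hden : 0 < 96 * L * (6 * L + κ2 + κ1 / 2) := by nlinarith
  have hc1 : c ≤ 1 := by
    rw [hc, div_le_one hden]
    nlinarith [sq_nonneg κ1, mul_nonneg (sub_nonneg.mpr hL) hκ2nn, mul_nonneg (sub_nonneg.mpr hL) hκ1nn]
  have hδh : c * h ≤ h := by nlinarith
  -- K is bounded by L on [-1,1]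
  have hKle : ∀ x : ℝ, |x| ≤ 1 → K x ≤ L := by
    intro x hx
    rw [abs_le] at hx
    rcases le_or_gt 0 x with h0 | h0
    · have h1 := hKlip x 1
      rw [hK1, sub_zero] at h1
      have hx1 : |x - 1| ≤ 1 := by rw [abs_le]; constructor <;> linarith
      calc K x ≤ |K x| := le_abs_self _
        _ ≤ L * |x - 1| := h1
        _ ≤ L * 1 := mul_le_mul_of_nonneg_left hx1 (le_of_lt hL0)
        _ = L := mul_one L
    · have h1 := hKlip x (-1)
      rw [hKm1, sub_zero] at h1
      have hx1 : |x - (-1)| ≤ 1 := by rw [abs_le]; constructor <;> linarith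
      calc K x ≤ |K x| := le_abs_self _
        _ ≤ L * |x - (-1)| := h1
        _ ≤ L * 1 := mul_le_mul_of_nonneg_left hx1 (le_of_lt hL0)
        _ = L := mul_one L
  -- K vanishes outside the window
  have hKzero : ∀ u : ℝ, h < |u| → K (u / h) = 0 := by
    intro u hu
    apply hKsupp
    intro hmem
    rw [Set.mem_Icc] at hmem
    have habs : |u / h| ≤ 1 := abs_le.mpr hmem
    rw [abs_div, abs_of_pos hh0, div_le_one hh0] at habs
    linarith
  -- spacings are nonnegative
  have hΔnn : ∀ i, 1 ≤ i → i ≤ n + 1 → 0 ≤ z i - z (i - 1) := by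
    intro i h1 h2
    have hz := hzmono (i - 1) (by omega)
    have hi : i - 1 + 1 = i := by omega
    rw [hi] at hz
    linarith
  -- telescoping sum of spacings
  have tele : ∀ q p : ℕ, 1 ≤ p → p ≤ q →
      ∑ i ∈ Finset.Icc p q, (z i - z (i - 1)) = z q - z (p - 1) := by
    intro q
    induction q with
    | zero => intro p h1 h2; exact absurd h2 (by omega)
    | succ m ih =>
      intro p h1 h2
      rcases Nat.lt_or_ge p (m + 1) with hlt | hge
      · have hpm : p ≤ m := by omega
        rw [Finset.sum_Icc_succ_top (by omega : p ≤ m + 1), ih p h1 hpm]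
        have hm : m + 1 - 1 = m := by omega
        rw [hm]
        ring
      · have hpe : p = m + 1 := by omega
        rw [hpe]
        simp [Finset.Icc_self]
  -- sum of spacings over a window of radius h is at most 3h
  have hsum_t : ∀ t : ℝ, ∑ i ∈ (Finset.Icc 1 n).filter (fun i => |t - z i| ≤ h),
      (z i - z (i - 1)) ≤ 3 * h := by
    intro t
    set A := (Finset.Icc 1 n).filter (fun i => |t - z i| ≤ h) with hA
    rcases A.eq_empty_or_nonempty with he | hne
    · rw [he]
      simp
      positivity
    · set p := A.min' hne with hp
      set q := A.max' hne with hq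
      have hpA : p ∈ A := A.min'_mem hne
      have hqA : q ∈ A := A.max'_mem hne
      have hpmem := Finset.mem_Icc.mp (Finset.mem_filter.mp hpA).1
      have hqmem := Finset.mem_Icc.mp (Finset.mem_filter.mp hqA).1
      have hpabs : |t - z p| ≤ h := (Finset.mem_filter.mp hpA).2
      have hqabs : |t - z q| ≤ h := (Finset.mem_filter.mp hqA).2
      have hpq : p ≤ q := A.min'_le q hqA
      have hsub : A ⊆ Finset.Icc p q := by
        intro i hi
        rw [Finset.mem_Icc]
        exact ⟨A.min'_le i hi, A.le_max' i hi⟩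
      have h1 : ∑ i ∈ A, (z i - z (i - 1)) ≤ ∑ i ∈ Finset.Icc p q, (z i - z (i - 1)) := by
        apply Finset.sum_le_sum_of_subset_of_nonneg hsub
        intro i hi _
        have hii := Finset.mem_Icc.mp hi
        exact hΔnn i (by omega) (by omega)
      rw [tele q p hpmem.1 hpq] at h1
      have hΔp : z p - z (p - 1) ≤ c * h := hmesh p hpmem.1 (by omega)
      rw [abs_le] at hpabs hqabs
      linarith [hpabs.2, hqabs.1]
  intro w j hj t₁ ht₁ t₂ ht₂
  -- the key pointwise Lipschitz estimate
  have key1 : ∀ u v : ℝ, |u| ≤ h →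
      |u ^ j * (K (u / h) / h) - v ^ j * (K (v / h) / h)| ≤ 3 * L * (h ^ j / h ^ 2) * |u - v| := by
    intro u v hu
    have hKd : |K (u / h) - K (v / h)| ≤ L * (|u - v| / h) := by
      have hlip := hKlip (u / h) (v / h)
      rwa [div_sub_div_same, abs_div, abs_of_pos hh0] at hlip
    have huj : |u| ^ j ≤ h ^ j := pow_le_pow_left₀ (abs_nonneg u) hu j
    have hT2 : |u ^ j - v ^ j| * |K (v / h)| ≤ 2 * (h ^ j / h) * |u - v| * L := by
      rcases eq_or_ne (K (v / h)) 0 with hKv | hKv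
      · rw [hKv, abs_zero, mul_zero]
        positivity
      · have hv : |v| ≤ h := by
          by_contra hcon
          push_neg at hcon
          exact hKv (hKzero v hcon)
        have hKvL : |K (v / h)| ≤ L := by
          rw [abs_of_nonneg (hKnonneg _)]
          apply hKle
          rw [abs_div, abs_of_pos hh0, div_le_one hh0]
          exact hv
        have hpow : |u ^ j - v ^ j| ≤ 2 * (h ^ j / h) * |u - v| := by
          interval_cases j
          · simp
            positivity
          · have h1 : h ^ 1 / h = 1 := by
              rw [pow_one, div_self (ne_of_gt hh0)]
            rw [h1]
            simp [pow_one]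
            linarith [abs_nonneg (u - v)]
          · have h2 : h ^ 2 / h = h := by
              rw [sq, mul_div_assoc, div_self (ne_of_gt hh0), mul_one]
            rw [h2]
            have he : u ^ 2 - v ^ 2 = (u + v) * (u - v) := by ring
            rw [he, abs_mul]
            have huv : |u + v| ≤ 2 * h := (abs_add_le u v).trans (by linarith [hu, hv])
            exact mul_le_mul_of_nonneg_right huv (abs_nonneg _)
        calc |u ^ j - v ^ j| * |K (v / h)| ≤ (2 * (h ^ j / h) * |u - v|) * L :=
              mul_le_mul hpow hKvL (abs_nonneg _) (by positivity)
          _ = 2 * (h ^ j / h) * |u - v| * L := rfl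
    have hexp : u ^ j * (K (u / h) / h) - v ^ j * (K (v / h) / h)
        = (u ^ j * (K (u / h) - K (v / h)) + (u ^ j - v ^ j) * K (v / h)) / h := by
      field_simp
      ring
    rw [hexp, abs_div, abs_of_pos hh0, div_le_iff₀ hh0]
    have ht1 : |u ^ j * (K (u / h) - K (v / h))| ≤ h ^ j * (L * (|u - v| / h)) := by
      rw [abs_mul, abs_pow]
      exact mul_le_mul huj hKd (abs_nonneg _) (by positivity)
    have ht2 : |(u ^ j - v ^ j) * K (v / h)| ≤ 2 * (h ^ j / h) * |u - v| * L := by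
      rw [abs_mul]
      exact hT2
    calc |u ^ j * (K (u / h) - K (v / h)) + (u ^ j - v ^ j) * K (v / h)|
        ≤ |u ^ j * (K (u / h) - K (v / h))| + |(u ^ j - v ^ j) * K (v / h)| := abs_add_le _ _
      _ ≤ h ^ j * (L * (|u - v| / h)) + 2 * (h ^ j / h) * |u - v| * L := add_le_add ht1 ht2
      _ = 3 * L * (h ^ j / h ^ 2) * |u - v| * h := by
          field_simp
          ring
  have key : ∀ u v : ℝ, (|u| ≤ h ∨ |v| ≤ h) →
      |u ^ j * (K (u / h) / h) - v ^ j * (K (v / h) / h)| ≤ 3 * L * (h ^ j / h ^ 2) * |u - v| := by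
    intro u v huv
    rcases huv with hu | hv
    · exact key1 u v hu
    · have hk := key1 v u hv
      rw [abs_sub_comm, abs_sub_comm v u] at hk
      exact hk
  show |w j t₂ - w j t₁| ≤ 18 * L * h ^ ((j : ℤ) - 1) * |t₂ - t₁|
  simp only [w]
  set d : ℕ → ℝ := fun i =>
    ((t₂ - z i) ^ j * (K ((t₂ - z i) / h) / h) - (t₁ - z i) ^ j * (K ((t₁ - z i) / h) / h))
      * (z i - z (i - 1)) with hd
  have hsplit : (∑ i ∈ Finset.Icc 1 n, (t₂ - z i) ^ j * (K ((t₂ - z i) / h) / h) * (z i - z (i - 1)))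
      - (∑ i ∈ Finset.Icc 1 n, (t₁ - z i) ^ j * (K ((t₁ - z i) / h) / h) * (z i - z (i - 1)))
      = ∑ i ∈ Finset.Icc 1 n, d i := by
    rw [← Finset.sum_sub_distrib]
    apply Finset.sum_congr rfl
    intro i _
    simp only [hd]
    ring
  rw [hsplit]
  set A := (Finset.Icc 1 n).filter (fun i => |t₂ - z i| ≤ h ∨ |t₁ - z i| ≤ h) with hA
  have hAe : ∑ i ∈ A, d i = ∑ i ∈ Finset.Icc 1 n, d i := by
    rw [hA]
    apply Finset.sum_filter_of_ne
    intro i _ hne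
    by_contra hcon
    push_neg at hcon
    apply hne
    simp only [hd]
    rw [hKzero _ hcon.1, hKzero _ hcon.2]
    simp
  rw [← hAe]
  have hbound : |∑ i ∈ A, d i| ≤ ∑ i ∈ A, 3 * L * (h ^ j / h ^ 2) * |t₂ - t₁| * (z i - z (i - 1)) := by
    refine (Finset.abs_sum_le_sum_abs _ _).trans (Finset.sum_le_sum ?_)
    intro i hi
    simp only [hd]
    rw [abs_mul]
    have hiI := Finset.mem_filter.mp hi
    have hiIcc := Finset.mem_Icc.mp hiI.1
    have hΔ := hΔnn i hiIcc.1 (by omega)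
    rw [abs_of_nonneg hΔ]
    apply mul_le_mul_of_nonneg_right _ hΔ
    have hk := key (t₂ - z i) (t₁ - z i) hiI.2
    have hd2 : t₂ - z i - (t₁ - z i) = t₂ - t₁ := by ring
    rwa [hd2] at hk
  have hsumΔ : ∑ i ∈ A, (z i - z (i - 1)) ≤ 6 * h := by
    rw [hA, Finset.filter_or]
    set A2 := (Finset.Icc 1 n).filter (fun i => |t₂ - z i| ≤ h) with hA2
    set A1 := (Finset.Icc 1 n).filter (fun i => |t₁ - z i| ≤ h) with hA1
    rw [← Finset.union_sdiff_self_eq_union, Finset.sum_union Finset.disjoint_sdiff]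
    have hdiff : ∑ i ∈ A1 \ A2, (z i - z (i - 1)) ≤ ∑ i ∈ A1, (z i - z (i - 1)) := by
      apply Finset.sum_le_sum_of_subset_of_nonneg (Finset.sdiff_subset)
      intro i hi _
      have hii := Finset.mem_Icc.mp (Finset.mem_filter.mp hi).1
      exact hΔnn i hii.1 (by omega)
    have h2 := hsum_t t₂
    have h1 := hsum_t t₁
    rw [← hA2] at h2
    rw [← hA1] at h1
    linarith
  have hCnn : 0 ≤ 3 * L * (h ^ j / h ^ 2) * |t₂ - t₁| := by positivity
  calc |∑ i ∈ A, d i| ≤ ∑ i ∈ A, 3 * L * (h ^ j / h ^ 2) * |t₂ - t₁| * (z i - z (i - 1)) := hbound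
    _ = 3 * L * (h ^ j / h ^ 2) * |t₂ - t₁| * ∑ i ∈ A, (z i - z (i - 1)) := by
        rw [Finset.mul_sum]
    _ ≤ 3 * L * (h ^ j / h ^ 2) * |t₂ - t₁| * (6 * h) := mul_le_mul_of_nonneg_left hsumΔ hCnn
    _ = 18 * L * h ^ ((j : ℤ) - 1) * |t₂ - t₁| := by
        rw [zpow_sub₀ (ne_of_gt hh0), zpow_natCast, zpow_one]
        field_simp
        ring
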